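/- For n ≥ 3, define Q_n = ∑_{N=1}^{n} C(n,N) · N^{N-1} · A_{n-N}(-n), where A_m(x) = x(x+m)^{m-1} for m ≥ 1 and A_0(x) = 1. Then Q_n = 0. -/

import Mathlib

open Finset fwdDiff

/-- The `n`-th forward difference of `x ^ j` vanishes when `j < n`. -/
lemma fwdDiff_iter_pow_eq_zero : ∀ j n : ℕ, j < n →
    (Δ_[(1 : ℚ)])^[n] (fun x : ℚ ↦ x ^ j) = 0 := by
  intro j
  induction j using Nat.strong_induction_on with
  | _ j IH =>
    intro n hn
    obtain ⟨m, rfl⟩ : ∃ m, n = m + 1 := ⟨n - 1, by omega⟩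
    rw [Function.iterate_succ_apply]
    have hΔ : Δ_[(1 : ℚ)] (fun x : ℚ ↦ x ^ j)
        = ∑ i ∈ Finset.range j, (j.choose i : ℚ) • (fun x : ℚ ↦ x ^ i) := by
      funext x
      simp only [fwdDiff, Finset.sum_apply, Pi.smul_apply, smul_eq_mul]
      rw [add_pow, Finset.sum_range_succ]
      simp [mul_comm]
    rw [hΔ, fwdDiff_iter_finset_sum]
    refine Finset.sum_eq_zero fun i hi => ?_
    rw [fwdDiff_iter_const_smul, IH i (Finset.mem_range.mp hi) m
      (by have := Finset.mem_range.mp hi; omega), smul_zero]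

/-- Alternating binomial sum of `k ^ j` vanishes for `j < n`. -/
lemma alt_sum_pow_eq_zero (n j : ℕ) (hj : j < n) :
    ∑ k ∈ Finset.range (n + 1), ((-1 : ℚ) ^ (n - k) * n.choose k) * (k : ℚ) ^ j = 0 := by
  have h := fwdDiff_iter_eq_sum_shift (1 : ℚ) (fun x : ℚ ↦ x ^ j) n 0
  rw [fwdDiff_iter_pow_eq_zero j n hj] at h
  have h' := h.symm
  simp only [Pi.zero_apply, zero_add, nsmul_eq_mul, mul_one, zsmul_eq_mul] at h'
  rw [← h']
  refine Finset.sum_congr rfl fun x _ => ?_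
  push_cast
  ring

/-- The Abel polynomial with parameter `a = -1`:
`A m x = x * (x + m)^(m-1)` for `m ≥ 1`, and `A 0 x = 1`. -/
def abel (m : ℕ) (x : ℚ) : ℚ := if m = 0 then 1 else x * (x + m) ^ (m - 1)

/-- For `n ≥ 3`, `Q_n = ∑_{N=1}^{n} C(n,N) · N^{N-1} · A_{n-N}(-n) = 0`. -/
theorem stmt_3 (n : ℕ) (hn : 3 ≤ n) :
    ∑ N ∈ Finset.Icc 1 n, (n.choose N : ℚ) * (N : ℚ) ^ (N - 1) * abel (n - N) (-(n : ℚ)) = 0 := by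
  have key := alt_sum_pow_eq_zero n (n - 2) (by omega)
  have hsub : ∑ k ∈ Finset.range (n + 1), ((-1 : ℚ) ^ (n - k) * n.choose k) * (k : ℚ) ^ (n - 2)
      = ∑ k ∈ Finset.Icc 1 n, ((-1 : ℚ) ^ (n - k) * n.choose k) * (k : ℚ) ^ (n - 2) := by
    refine (Finset.sum_subset ?_ ?_).symm
    · intro k hk
      simp only [Finset.mem_Icc, Finset.mem_range] at *
      omega
    · intro k hk hk'
      simp only [Finset.mem_Icc, Finset.mem_range] at *
      have : k = 0 := by omega
      subst this
      simp
      omega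
  rw [hsub] at key
  have hterm : ∀ N ∈ Finset.Icc 1 n,
      (n.choose N : ℚ) * (N : ℚ) ^ (N - 1) * abel (n - N) (-(n : ℚ))
        = (n : ℚ) * (((-1 : ℚ) ^ (n - N) * n.choose N) * (N : ℚ) ^ (n - 2)) := by
    intro N hN
    simp only [Finset.mem_Icc] at hN
    obtain ⟨h1, h2⟩ := hN
    rcases eq_or_lt_of_le h2 with rfl | hlt
    · simp only [abel, Nat.sub_self, if_pos rfl, Nat.choose_self, Nat.cast_one, one_mul, mul_one,
        pow_zero]
      have hN1 : N - 1 = (N - 2) + 1 := by omega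
      rw [hN1, pow_succ]
      simp [mul_comm]
    · have hm : n - N ≠ 0 := by omega
      simp only [abel, if_neg hm]
      have hcast : ((n - N : ℕ) : ℚ) = (n : ℚ) - N := by
        rw [Nat.cast_sub h2]
      rw [hcast]
      have hbase : -(n : ℚ) + ((n : ℚ) - N) = -(N : ℚ) := by ring
      rw [hbase, neg_pow]
      have hpow : (N : ℚ) ^ (N - 1) * (N : ℚ) ^ (n - N - 1) = (N : ℚ) ^ (n - 2) := by
        rw [← pow_add]; congr 1; omega
      have hsign : (-1 : ℚ) ^ (n - N - 1) * (-(n : ℚ)) = (n : ℚ) * (-1 : ℚ) ^ (n - N) := by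
        obtain ⟨m, hm'⟩ : ∃ m, n - N = m + 1 := ⟨n - N - 1, by omega⟩
        rw [hm', Nat.add_sub_cancel, pow_succ]
        ring
      calc (n.choose N : ℚ) * (N : ℚ) ^ (N - 1) * (-(n:ℚ) * ((-1:ℚ) ^ (n - N - 1) * (N:ℚ) ^ (n - N - 1)))
          = ((-1:ℚ) ^ (n - N - 1) * (-(n:ℚ))) * ((n.choose N : ℚ) * ((N : ℚ) ^ (N - 1) * (N : ℚ) ^ (n - N - 1))) := by ring
        _ = (n : ℚ) * (((-1 : ℚ) ^ (n - N) * n.choose N) * (N : ℚ) ^ (n - 2)) := by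
            rw [hpow, hsign]; ring
  rw [Finset.sum_congr rfl hterm, ← Finset.mul_sum, key, mul_zero]
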